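/- Let θ_Γ, θ_c > 0 and 0 < d < 1 with θ_Γ ≤ (1-d)·θ_c. Suppose χ_∞ : Ω → [0,1] is measurable on a bounded measurable set Ω ⊂ ℝ³ with |Ω| > 0, and for a.e. x ∈ Ω, θ_Γ/θ_c - 1 + (d/|Ω|)·∫_Ω(1-χ_∞(x'))dx' ∈ ∂I(χ_∞(x)), where ∂I is the subdifferential of the indicator function of [0,1]. Then χ_∞ = 0 a.e. in Ω. -/

import Mathlib

open MeasureTheory Set

/-- The subdifferential of the indicator function of `[0,1] ⊂ ℝ` at `χ ∈ [0,1]`. -/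
def subI (χ : ℝ) : Set ℝ := {η | ∀ y ∈ Icc (0:ℝ) 1, η * (y - χ) ≤ 0}

/-- for `0 < d < 1` and `θ_Γ ≤ (1-d) θ_c`, the only equilibrium
phase distribution is the pure solid `χ_∞ = 0` a.e. -/
theorem stmt12 (Ω : Set (Fin 3 → ℝ)) (hΩmeas : MeasurableSet Ω)
    (hΩbdd : Bornology.IsBounded Ω)
    (hΩpos : 0 < volume Ω)
    (θΓ θc d : ℝ) (hθΓ : 0 < θΓ) (hθc : 0 < θc) (hd01 : d ∈ Ioo (0:ℝ) 1) (hord : θΓ ≤ (1 - d) * θc)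
    (χ : (Fin 3 → ℝ) → ℝ) (hχmeas : Measurable χ)
    (hχrange : ∀ᵐ x ∂(volume.restrict Ω), χ x ∈ Icc (0:ℝ) 1)
    (heq : ∀ᵐ x ∂(volume.restrict Ω),
      θΓ / θc - 1 + (d / (volume Ω).toReal) * (∫ x' in Ω, (1 - χ x')) ∈
        subI (χ x)) :
    ∀ᵐ x ∂(volume.restrict Ω), χ x = 0 := by
  have hfin : volume Ω < ⊤ := hΩbdd.measure_lt_top
  haveI : IsFiniteMeasure (volume.restrict Ω) :=
    ⟨by rwa [Measure.restrict_apply_univ]⟩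
  have hV : 0 < (volume Ω).toReal := ENNReal.toReal_pos hΩpos.ne' hfin.ne
  have hχint : Integrable χ (volume.restrict Ω) := by
    refine (integrable_const (1:ℝ)).mono' hχmeas.aestronglyMeasurable ?_
    filter_upwards [hχrange] with x hx
    rw [Real.norm_eq_abs, abs_le]
    exact ⟨by linarith [hx.1], hx.2⟩
  have hI0 : 0 ≤ ∫ x in Ω, χ x := by
    apply integral_nonneg_of_ae
    filter_upwards [hχrange] with x hx using hx.1
  by_cases hI : (∫ x in Ω, χ x) = 0
  · have h := (integral_eq_zero_iff_of_nonneg_ae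
      (by filter_upwards [hχrange] with x hx using hx.1) hχint).mp hI
    filter_upwards [h] with x hx using hx
  · have hIpos : 0 < ∫ x in Ω, χ x := lt_of_le_of_ne hI0 (Ne.symm hI)
    have hsub : (∫ x' in Ω, (1 - χ x')) = (volume Ω).toReal - ∫ x in Ω, χ x := by
      rw [integral_sub (integrable_const 1) hχint, integral_const,
        measureReal_restrict_apply_univ, smul_eq_mul, mul_one, measureReal_def]
    have hcneg : θΓ / θc - 1 + (d / (volume Ω).toReal) * (∫ x' in Ω, (1 - χ x')) < 0 := by
      have h1 : θΓ / θc ≤ 1 - d := (div_le_iff₀ hθc).mpr hord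
      have h2 : d / (volume Ω).toReal * ((volume Ω).toReal - ∫ x in Ω, χ x)
          = d - d / (volume Ω).toReal * ∫ x in Ω, χ x := by
        field_simp
      have h3 : 0 < d / (volume Ω).toReal * ∫ x in Ω, χ x := by
        have hd := hd01.1
        positivity
      rw [hsub, h2]
      linarith
    filter_upwards [heq, hχrange] with x hx hxr
    have h0 := hx 0 (by norm_num)
    nlinarith [hxr.1, hcneg, h0]
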